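/- For the one-dimensional Gaussian N(μ, σ²) and a bounded continuous function f, the derivative of J(μ) = E_{x~N(μ,σ²)}[f(x)] with respect to μ equals σ⁻² E[f(x)(x − μ)]. -/

import Mathlib

open MeasureTheory Real

/-- Density of the one-dimensional Gaussian `N(m, σ²)`. -/
noncomputable def gaussPdf1 (m σ x : ℝ) : ℝ :=
  (Real.sqrt (2 * Real.pi * σ ^ 2))⁻¹ * Real.exp (-(x - m) ^ 2 / (2 * σ ^ 2))

lemma gaussPdf1_nonneg (m σ x : ℝ) : 0 ≤ gaussPdf1 m σ x := by
  unfold gaussPdf1; positivity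

lemma gaussPdf1_hasDerivAt (σ : ℝ) (hσ : 0 < σ) (x m : ℝ) :
    HasDerivAt (fun m => gaussPdf1 m σ x) (gaussPdf1 m σ x * ((x - m) / σ ^ 2)) m := by
  have hσ2 : (σ:ℝ) ^ 2 ≠ 0 := by positivity
  have h0 : HasDerivAt (fun m : ℝ => x - m) (-1) m := (hasDerivAt_id m).const_sub x
  have h1 := h0.pow 2
  have h2 := (h1.neg.div_const (2 * σ ^ 2)).exp
  have h3 := h2.const_mul ((Real.sqrt (2 * Real.pi * σ ^ 2))⁻¹)
  refine h3.congr_deriv ?_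
  simp only [Pi.neg_apply, Pi.pow_apply]
  unfold gaussPdf1
  field_simp
  ring

lemma gaussPdf1_continuous (m σ : ℝ) : Continuous (fun x => gaussPdf1 m σ x) := by
  unfold gaussPdf1; fun_prop

lemma gaussPdf1_integrable (m σ : ℝ) (hσ : 0 < σ) :
    Integrable (fun x => gaussPdf1 m σ x) := by
  have hb : (0:ℝ) < (2 * σ ^ 2)⁻¹ := by positivity
  have h := ((integrable_exp_neg_mul_sq hb).comp_sub_right m).const_mul
    ((Real.sqrt (2 * Real.pi * σ ^ 2))⁻¹)
  convert h using 2 with x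
  unfold gaussPdf1
  congr 1
  ring

lemma gaussPdf1_le (σ : ℝ) (hσ : 0 < σ) (μ x m : ℝ) (hm : |m - μ| ≤ 1) :
    gaussPdf1 m σ x ≤ (Real.sqrt (2 * Real.pi * σ ^ 2))⁻¹ *
      (Real.exp (1 / (2 * σ ^ 2)) * Real.exp (-(x - μ) ^ 2 / (4 * σ ^ 2))) := by
  have hσ2 : (0:ℝ) < σ ^ 2 := by positivity
  have hm2 : (m - μ) ^ 2 ≤ 1 := by
    have := sq_abs (m - μ)
    nlinarith [sq_nonneg (|m - μ| - 1), abs_nonneg (m - μ)]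
  unfold gaussPdf1
  apply mul_le_mul_of_nonneg_left _ (by positivity)
  rw [← Real.exp_add]
  apply Real.exp_le_exp.mpr
  rw [show 1 / (2 * σ ^ 2) + -(x - μ) ^ 2 / (4 * σ ^ 2)
      = (2 - (x - μ) ^ 2) / (4 * σ ^ 2) from by field_simp; ring,
    div_le_div_iff₀ (by positivity) (by positivity)]
  nlinarith [sq_nonneg ((x - m) - (m - μ)), mul_nonneg hσ2.le
    (by nlinarith [sq_nonneg ((x - m) - (m - μ))] : (0:ℝ) ≤ 2 - (x - μ) ^ 2 + 2 * (x - m) ^ 2)]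

/-- 1-D: `d/dμ E_{N(μ,σ²)}[f] = σ⁻² E[f(x)(x-μ)]` for bounded continuous `f`. -/
theorem deriv_expected_fitness_1d (f : ℝ → ℝ) (hc : Continuous f)
    (B : ℝ) (hB : ∀ x, |f x| ≤ B) (σ : ℝ) (hσ : 0 < σ) (μ : ℝ) :
    deriv (fun m : ℝ => ∫ x : ℝ, f x * gaussPdf1 m σ x) μ
      = (σ ^ 2)⁻¹ * ∫ x : ℝ, f x * gaussPdf1 μ σ x * (x - μ) := by
  have hσ2 : (0:ℝ) < σ ^ 2 := by positivity
  have hBnn : 0 ≤ B := le_trans (abs_nonneg _) (hB 0)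
  set c : ℝ := (Real.sqrt (2 * Real.pi * σ ^ 2))⁻¹ with hcdef
  have hcpos : 0 < c := by rw [hcdef]; positivity
  set K : ℝ := B * (c * Real.exp (1 / (2 * σ ^ 2))) / σ ^ 2 with hKdef
  -- the dominating function
  set bound : ℝ → ℝ := fun x => K * ((|x - μ| + 1) * Real.exp (-(x - μ) ^ 2 / (4 * σ ^ 2)))
    with hbdef
  have hb4 : (0:ℝ) < (4 * σ ^ 2)⁻¹ := by positivity
  have g_int : Integrable (fun y : ℝ => (|y| + 1) * Real.exp (-y ^ 2 / (4 * σ ^ 2))) := by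
    have h1 : Integrable (fun y : ℝ => |y| * Real.exp (-(4 * σ ^ 2)⁻¹ * y ^ 2)) := by
      have h := (integrable_mul_exp_neg_mul_sq hb4).abs
      convert h using 2 with y
      rw [abs_mul, abs_of_pos (Real.exp_pos _)]
    have h2 : Integrable (fun y : ℝ => Real.exp (-(4 * σ ^ 2)⁻¹ * y ^ 2)) :=
      integrable_exp_neg_mul_sq hb4
    have h3 := h1.add h2
    refine h3.congr (Filter.Eventually.of_forall fun y => ?_)
    simp only [Pi.add_apply]
    rw [show -y ^ 2 / (4 * σ ^ 2) = -(4 * σ ^ 2)⁻¹ * y ^ 2 from by ring]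
    ring
  have bound_int : Integrable bound := ((g_int.comp_sub_right μ).const_mul K)
  -- derivative of the integrand in m
  have key : ∀ x m : ℝ, HasDerivAt (fun m => f x * gaussPdf1 m σ x)
      (f x * gaussPdf1 m σ x * ((x - m) / σ ^ 2)) m := by
    intro x m
    have := (gaussPdf1_hasDerivAt σ hσ x m).const_mul (f x)
    exact this.congr_deriv (by ring)
  have hF_meas : ∀ᶠ m in nhds μ, AEStronglyMeasurable (fun x => f x * gaussPdf1 m σ x)
      (volume : Measure ℝ) :=
    Filter.Eventually.of_forall fun m =>
      (hc.mul (gaussPdf1_continuous m σ)).aestronglyMeasurable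
  have hF_int : Integrable (fun x => f x * gaussPdf1 μ σ x) :=
    (gaussPdf1_integrable μ σ hσ).bdd_mul hc.aestronglyMeasurable
      (c := B) (Filter.Eventually.of_forall fun x => by simpa using hB x)
  have hF'_meas : AEStronglyMeasurable
      (fun x => f x * gaussPdf1 μ σ x * ((x - μ) / σ ^ 2)) (volume : Measure ℝ) := by
    apply Continuous.aestronglyMeasurable
    exact (hc.mul (gaussPdf1_continuous μ σ)).mul (by fun_prop)
  have h_bound : ∀ᵐ x : ℝ, ∀ m ∈ Metric.ball μ 1,
      ‖f x * gaussPdf1 m σ x * ((x - m) / σ ^ 2)‖ ≤ bound x := by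
    refine Filter.Eventually.of_forall fun x m hm => ?_
    have hm1 : |m - μ| ≤ 1 := le_of_lt (by simpa [Real.dist_eq] using hm)
    have hxm : |x - m| ≤ |x - μ| + 1 := by
      calc |x - m| = |(x - μ) - (m - μ)| := by ring_nf
        _ ≤ |x - μ| + |m - μ| := abs_sub _ _
        _ ≤ |x - μ| + 1 := by linarith
    have hg := gaussPdf1_le σ hσ μ x m hm1
    calc ‖f x * gaussPdf1 m σ x * ((x - m) / σ ^ 2)‖
        = |f x| * gaussPdf1 m σ x * (|x - m| / σ ^ 2) := by
          rw [Real.norm_eq_abs, abs_mul, abs_mul, abs_div,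
            abs_of_nonneg (gaussPdf1_nonneg m σ x), abs_of_pos hσ2]
      _ ≤ B * (c * (Real.exp (1 / (2 * σ ^ 2)) * Real.exp (-(x - μ) ^ 2 / (4 * σ ^ 2)))) *
            ((|x - μ| + 1) / σ ^ 2) := by
          gcongr
          · exact gaussPdf1_nonneg m σ x
          · exact hB x
      _ = bound x := by rw [hbdef, hKdef]; field_simp
  have h_diff : ∀ᵐ x : ℝ, ∀ m ∈ Metric.ball μ 1,
      HasDerivAt (fun m => f x * gaussPdf1 m σ x) (f x * gaussPdf1 m σ x * ((x - m) / σ ^ 2)) m :=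
    Filter.Eventually.of_forall fun x m _ => key x m
  have main := hasDerivAt_integral_of_dominated_loc_of_deriv_le (Metric.ball_mem_nhds μ one_pos) hF_meas hF_int
    hF'_meas h_bound bound_int h_diff
  rw [main.2.deriv]
  rw [show (fun x : ℝ => f x * gaussPdf1 μ σ x * ((x - μ) / σ ^ 2))
      = fun x : ℝ => (σ ^ 2)⁻¹ * (f x * gaussPdf1 μ σ x * (x - μ)) from by
        funext x; ring]
  rw [integral_const_mul]
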